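/- Let n > 2, ζ = 2π/n, and for k ∈ {2,...,n−2,n} define T_k : ℂ² → ℂ^{2(n+1)} by T_k(w) = (0, n^{−1/2} e^{(ikI+J)ζ} w, ..., n^{−1/2} e^{n(ikI+J)ζ} w), where the exponential of the real 2×2 matrix (ikI+J)ζ acts on w ∈ ℂ². Then T_k is a linear isometry onto its image W_k, and for k ≠ k' in {2,...,n−2,n} ∪ {1, n−1} the images W_k and W_{k'} are orthogonal in ℂ^{2(n+1)} (with the standard Hermitian inner product). -/

import Mathlib

open Matrix Complex

/-- The real symplectic matrix `J`, viewed over `ℂ`. -/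
noncomputable def Jc : Matrix (Fin 2) (Fin 2) ℂ := !![0, -1; 1, 0]

/-- The 2×2 block `e^{j (ikI + J) ζ}` with `ζ = 2π/n`, acting on `ℂ²`. -/
noncomputable def Eblk (n k j : ℕ) : Matrix (Fin 2) (Fin 2) ℂ :=
  NormedSpace.exp
    ((j : ℂ) • (((2 * Real.pi / n : ℝ) : ℂ) •
      ((Complex.I * (k : ℂ)) • (1 : Matrix (Fin 2) (Fin 2) ℂ) + Jc)))

/-- `T_k : ℂ² → ℂ^{2(n+1)}` for `k ∈ {2,…,n−2, n}`:
`T_k(w) = (0, n^{-1/2} e^{(ikI+J)ζ} w, …, n^{-1/2} e^{n(ikI+J)ζ} w)`. -/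
noncomputable def Tmid (n k : ℕ) (w : EuclideanSpace ℂ (Fin 2)) :
    EuclideanSpace ℂ (Fin (n + 1) × Fin 2) :=
  (WithLp.equiv 2 (Fin (n + 1) × Fin 2 → ℂ)).symm fun p =>
    if p.1 = 0 then 0
    else ((Real.sqrt n : ℂ))⁻¹ * (Eblk n k (p.1 : ℕ)).mulVec (fun i => w i) p.2

/-- The vectors `v₁ = 2^{-1/2}(1, i)` and `v_{n-1} = 2^{-1/2}(1, -i)`. -/
noncomputable def vlow (n k : ℕ) : Fin 2 → ℂ :=
  if k = 1 then ![((Real.sqrt 2 : ℂ))⁻¹, ((Real.sqrt 2 : ℂ))⁻¹ * Complex.I]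
  else ![((Real.sqrt 2 : ℂ))⁻¹, -(((Real.sqrt 2 : ℂ))⁻¹ * Complex.I)]

/-- `T_k : ℂ³ → ℂ^{2(n+1)}` for `k ∈ {1, n−1}`:
`T_k(α, w) = (v_k α, n^{-1/2} e^{(ikI+J)ζ} w, …, n^{-1/2} e^{n(ikI+J)ζ} w)`. -/
noncomputable def Tlow (n k : ℕ) (z : EuclideanSpace ℂ (Fin 3)) :
    EuclideanSpace ℂ (Fin (n + 1) × Fin 2) :=
  (WithLp.equiv 2 (Fin (n + 1) × Fin 2 → ℂ)).symm fun p =>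
    if p.1 = 0 then vlow n k p.2 * z 0
    else ((Real.sqrt n : ℂ))⁻¹ * (Eblk n k (p.1 : ℕ)).mulVec ![z 1, z 2] p.2


open Finset

lemma smul_one_diag (c : ℂ) : c • (1 : Matrix (Fin 2) (Fin 2) ℂ) = diagonal (fun _ => c) := by
  ext i j
  by_cases h : i = j <;>
    simp [Matrix.smul_apply, Matrix.one_apply, Matrix.diagonal_apply, h]

lemma exp_smul_one (c : ℂ) :
    NormedSpace.exp (c • (1 : Matrix (Fin 2) (Fin 2) ℂ)) = Complex.exp c • 1 := by
  rw [smul_one_diag, Matrix.exp_diagonal, Pi.exp_def, smul_one_diag]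
  exact congrArg diagonal (funext fun i => (Complex.exp_eq_exp_ℂ ▸ rfl))

noncomputable def Amat (s t : ℝ) : Matrix (Fin 2) (Fin 2) ℂ :=
  (Complex.I * (s : ℂ)) • 1 + (t : ℂ) • Jc

lemma Amat_conjT (s t : ℝ) : (Amat s t)ᴴ = Amat (-s) (-t) := by
  ext i j
  fin_cases i <;> fin_cases j <;>
    simp [Amat, Jc, Matrix.conjTranspose_apply, Matrix.one_apply]

lemma Amat_add (s t s' t' : ℝ) : Amat s t + Amat s' t' = Amat (s + s') (t + t') := by
  unfold Amat
  push_cast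
  rw [mul_add, add_smul, add_smul]
  abel

lemma Amat_commute (s t s' t' : ℝ) : Commute (Amat s t) (Amat s' t') := by
  unfold Commute SemiconjBy Amat
  simp only [add_mul, mul_add, Matrix.smul_mul, Matrix.mul_smul, one_mul, mul_one, smul_smul]
  module

lemma Eblk_eq_A (n k j : ℕ) :
    Eblk n k j = NormedSpace.exp
      (Amat ((k * j : ℝ) * (2 * Real.pi / n)) ((j : ℝ) * (2 * Real.pi / n))) := by
  unfold Eblk Amat
  congr 1
  rw [smul_add, smul_add, smul_smul, smul_smul, smul_smul]
  congr 1
  · congr 1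
    push_cast
    ring
  · congr 1
    push_cast
    ring

noncomputable def cfac (n k k' : ℕ) : ℂ :=
  Complex.exp (Complex.I * ((k' : ℂ) - (k : ℂ)) * ((2 * Real.pi / n : ℝ) : ℂ))

lemma Eblk_adj_mul (n k k' j : ℕ) :
    (Eblk n k j)ᴴ * Eblk n k' j = (cfac n k k') ^ j • 1 := by
  rw [Eblk_eq_A, Eblk_eq_A, ← Matrix.exp_conjTranspose, Amat_conjT,
    ← Matrix.exp_add_of_commute _ _ (Amat_commute _ _ _ _), Amat_add]
  have h : (-((j:ℝ) * (2 * Real.pi / n)) + (j:ℝ) * (2 * Real.pi / n)) = 0 := by ring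
  rw [h]
  unfold Amat
  rw [Complex.ofReal_zero, zero_smul, add_zero, exp_smul_one]
  congr 1
  rw [cfac, ← Complex.exp_nat_mul]
  congr 1
  push_cast
  ring

lemma dot_mulVec (A B : Matrix (Fin 2) (Fin 2) ℂ) (c : ℂ) (h : Aᴴ * B = c • 1)
    (v w : Fin 2 → ℂ) :
    ∑ i, (starRingEnd ℂ) (A.mulVec v i) * (B.mulVec w i)
      = c * ∑ i, (starRingEnd ℂ) (v i) * w i := by
  have h1 : ∑ i, (starRingEnd ℂ) (A.mulVec v i) * (B.mulVec w i)
      = star (A.mulVec v) ⬝ᵥ B.mulVec w := by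
    simp [dotProduct, Pi.star_apply, RCLike.star_def]
  have h2 : c * ∑ i, (starRingEnd ℂ) (v i) * w i = c • (star v ⬝ᵥ w) := by
    simp [dotProduct, Pi.star_apply, RCLike.star_def, Finset.mul_sum]
  have h3 : star v ᵥ* (c • (1 : Matrix (Fin 2) (Fin 2) ℂ)) = c • star v := by
    ext i
    simp [Matrix.vecMul, dotProduct, Matrix.smul_apply, Matrix.one_apply, mul_ite,
      Finset.sum_ite_eq, mul_comm]
  rw [h1, h2, star_mulVec, Matrix.dotProduct_mulVec, Matrix.vecMul_vecMul, h, h3,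
    smul_dotProduct]

lemma sum_if_pow_eq_zero (n : ℕ) (c : ℂ) (hc : c ^ n = 1) (h1 : c ≠ 1) :
    ∑ j : Fin (n+1), (if j = 0 then 0 else c ^ (j : ℕ)) = 0 := by
  have : ∀ j : Fin (n+1), (if j = 0 then (0:ℂ) else c ^ (j : ℕ))
      = (fun m : ℕ => if m = 0 then (0:ℂ) else c ^ m) (j : ℕ) := by
    intro j
    simp [← Fin.val_eq_zero_iff]
  rw [Finset.sum_congr rfl (fun j _ => this j),
    Fin.sum_univ_eq_sum_range (fun m : ℕ => if m = 0 then (0:ℂ) else c ^ m),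
    Finset.sum_range_succ']
  simp only [Nat.succ_ne_zero, if_neg, if_pos rfl, add_zero, reduceIte]
  have : ∀ i, c ^ (i + 1) = c * c ^ i := fun i => by ring
  rw [Finset.sum_congr rfl (fun i _ => this i), ← Finset.mul_sum, geom_sum_eq h1, hc]
  simp

lemma sum_if_one_eq (n : ℕ) :
    ∑ j : Fin (n+1), (if j = 0 then 0 else (1:ℂ)) = n := by
  have : ∀ j : Fin (n+1), (if j = 0 then (0:ℂ) else 1)
      = (fun m : ℕ => if m = 0 then (0:ℂ) else 1) (j : ℕ) := by
    intro j; simp [← Fin.val_eq_zero_iff]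
  rw [Finset.sum_congr rfl (fun j _ => this j),
    Fin.sum_univ_eq_sum_range (fun m : ℕ => if m = 0 then (0:ℂ) else 1),
    Finset.sum_range_succ']
  simp

lemma cfac_pow_n (n k k' : ℕ) (hn : 0 < n) : cfac n k k' ^ n = 1 := by
  rw [cfac, ← Complex.exp_nat_mul]
  have hn0 : (n:ℂ) ≠ 0 := Nat.cast_ne_zero.2 hn.ne'
  have h : (n:ℂ) * (Complex.I * ((k':ℂ) - (k:ℂ)) * ((2 * Real.pi / n : ℝ) : ℂ))
      = (((k':ℤ) - (k:ℤ) : ℤ) : ℂ) * (2 * Real.pi * Complex.I) := by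
    push_cast
    field_simp
  rw [h, Complex.exp_int_mul_two_pi_mul_I]

lemma cfac_self (n k : ℕ) : cfac n k k = 1 := by
  simp [cfac]

lemma cfac_ne_one (n k k' : ℕ) (hn : 0 < n) (h1 : k ≤ n) (h2 : k' ≤ n)
    (h3 : 1 ≤ k) (h4 : 1 ≤ k') (hne : k ≠ k') : cfac n k k' ≠ 1 := by
  intro h
  rw [cfac, Complex.exp_eq_one_iff] at h
  obtain ⟨m, hm⟩ := h
  have hn0 : (n:ℂ) ≠ 0 := Nat.cast_ne_zero.2 hn.ne'
  have hπ : (Real.pi : ℂ) ≠ 0 := Complex.ofReal_ne_zero.2 Real.pi_ne_zero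
  have hI : Complex.I ≠ 0 := Complex.I_ne_zero
  push_cast at hm
  have h2pi : (2:ℂ) * Real.pi * Complex.I ≠ 0 := by
    apply mul_ne_zero (mul_ne_zero two_ne_zero hπ) hI
  have hd : ((k':ℂ) - (k:ℂ)) = (m:ℂ) * (n:ℂ) := by
    field_simp at hm
    have key : ((k':ℂ) - (k:ℂ)) * (2 * Real.pi * Complex.I)
        = ((m:ℂ) * (n:ℂ)) * (2 * Real.pi * Complex.I) := by linear_combination (2 * Real.pi * Complex.I) * hm
    exact mul_right_cancel₀ h2pi key
  have hdz : (k':ℤ) - (k:ℤ) = m * n := by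
    exact_mod_cast hd
  have hb1 : (k':ℤ) - (k:ℤ) < n := by omega
  have hb2 : -(n:ℤ) < (k':ℤ) - (k:ℤ) := by omega
  have hdne : (k':ℤ) - (k:ℤ) ≠ 0 := by omega
  have hm0 : m = 0 := by nlinarith [hdz, hb1, hb2]
  rw [hm0] at hdz
  simp at hdz
  omega

lemma master (n k k' : ℕ) (b b' v w : Fin 2 → ℂ) :
    ∑ p : Fin (n+1) × Fin 2,
      (starRingEnd ℂ) (if p.1 = 0 then b p.2
          else ((Real.sqrt n : ℂ))⁻¹ * (Eblk n k (p.1 : ℕ)).mulVec v p.2) *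
      (if p.1 = 0 then b' p.2
          else ((Real.sqrt n : ℂ))⁻¹ * (Eblk n k' (p.1 : ℕ)).mulVec w p.2)
    = (∑ i, (starRingEnd ℂ) (b i) * b' i)
      + ((n:ℂ))⁻¹ * (∑ j : Fin (n+1), if j = 0 then (0:ℂ) else cfac n k k' ^ (j : ℕ))
        * ∑ i, (starRingEnd ℂ) (v i) * w i := by
  have hsq : ((Real.sqrt n : ℂ))⁻¹ * ((Real.sqrt n : ℂ))⁻¹ = ((n:ℂ))⁻¹ := by
    rw [← mul_inv, ← Complex.ofReal_mul, Real.mul_self_sqrt (Nat.cast_nonneg n)]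
    push_cast
    ring
  rw [Fintype.sum_prod_type]
  have hterm : ∀ j : Fin (n+1),
      (∑ i : Fin 2,
        (starRingEnd ℂ) (if j = 0 then b i
            else ((Real.sqrt n : ℂ))⁻¹ * (Eblk n k (j : ℕ)).mulVec v i) *
        (if j = 0 then b' i
            else ((Real.sqrt n : ℂ))⁻¹ * (Eblk n k' (j : ℕ)).mulVec w i))
      = (if j = 0 then ∑ i, (starRingEnd ℂ) (b i) * b' i else 0)
        + ((n:ℂ))⁻¹ * (if j = 0 then (0:ℂ) else cfac n k k' ^ (j : ℕ))
          * ∑ i, (starRingEnd ℂ) (v i) * w i := by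
    intro j
    by_cases hj : j = 0
    · simp [hj]
    · simp only [if_neg hj, zero_add]
      have hfac : ∀ i : Fin 2,
          (starRingEnd ℂ) (((Real.sqrt n : ℂ))⁻¹ * (Eblk n k (j : ℕ)).mulVec v i)
            * (((Real.sqrt n : ℂ))⁻¹ * (Eblk n k' (j : ℕ)).mulVec w i)
          = ((n:ℂ))⁻¹ * ((starRingEnd ℂ) ((Eblk n k (j : ℕ)).mulVec v i)
              * ((Eblk n k' (j : ℕ)).mulVec w i)) := by
        intro i
        simp only [_root_.map_mul, _root_.map_inv₀, Complex.conj_ofReal]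
        rw [← hsq]
        ring
      rw [Finset.sum_congr rfl (fun i _ => hfac i), ← Finset.mul_sum,
        dot_mulVec _ _ _ (Eblk_adj_mul n k k' (j : ℕ)) v w]
      ring
  rw [Finset.sum_congr rfl (fun j _ => hterm j), Finset.sum_add_distrib]
  congr 1
  · rw [Finset.sum_ite_eq' Finset.univ (0 : Fin (n+1))]
    simp
  · rw [← Finset.sum_mul, ← Finset.mul_sum]

lemma inner_withLp {n : ℕ} (f g : Fin (n+1) × Fin 2 → ℂ) :
    (inner ℂ ((WithLp.equiv 2 (Fin (n + 1) × Fin 2 → ℂ)).symm f)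
        ((WithLp.equiv 2 (Fin (n + 1) × Fin 2 → ℂ)).symm g) : ℂ)
      = ∑ p, (starRingEnd ℂ) (f p) * g p := by
  simp [PiLp.inner_apply, RCLike.inner_apply, mul_comm]

lemma norm_eq_of_inner_eq {E F : Type*} [NormedAddCommGroup E] [InnerProductSpace ℂ E]
    [NormedAddCommGroup F] [InnerProductSpace ℂ F] {x : E} {y : F}
    (h : (inner ℂ x x : ℂ) = inner ℂ y y) : ‖x‖ = ‖y‖ := by
  rw [inner_self_eq_norm_sq_to_K, inner_self_eq_norm_sq_to_K] at h
  have h2 : ‖x‖ ^ 2 = ‖y‖ ^ 2 := by exact_mod_cast h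
  calc ‖x‖ = Real.sqrt (‖x‖ ^ 2) := (Real.sqrt_sq (norm_nonneg _)).symm
    _ = Real.sqrt (‖y‖ ^ 2) := by rw [h2]
    _ = ‖y‖ := Real.sqrt_sq (norm_nonneg _)

lemma inner_Tmid_Tmid (n k k' : ℕ) (w w' : EuclideanSpace ℂ (Fin 2)) :
    (inner ℂ (Tmid n k w) (Tmid n k' w') : ℂ)
      = ((n:ℂ))⁻¹ * (∑ j : Fin (n+1), if j = 0 then (0:ℂ) else cfac n k k' ^ (j : ℕ))
        * (inner ℂ w w' : ℂ) := by
  rw [Tmid, Tmid, inner_withLp,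
    master n k k' (fun _ => (0:ℂ)) (fun _ => (0:ℂ)) (fun i => w i) (fun i => w' i)]
  simp [PiLp.inner_apply, RCLike.inner_apply, mul_comm]

lemma inner_Tmid_Tlow (n k k' : ℕ) (w : EuclideanSpace ℂ (Fin 2))
    (z : EuclideanSpace ℂ (Fin 3)) :
    (inner ℂ (Tmid n k w) (Tlow n k' z) : ℂ)
      = ((n:ℂ))⁻¹ * (∑ j : Fin (n+1), if j = 0 then (0:ℂ) else cfac n k k' ^ (j : ℕ))
        * ∑ i, (starRingEnd ℂ) (w i) * (![z 1, z 2] i) := by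
  rw [Tmid, Tlow, inner_withLp,
    master n k k' (fun _ => (0:ℂ)) (fun i => vlow n k' i * z 0) (fun i => w i) ![z 1, z 2]]
  simp

lemma inner_Tlow_Tlow (n k k' : ℕ) (z z' : EuclideanSpace ℂ (Fin 3)) :
    (inner ℂ (Tlow n k z) (Tlow n k' z') : ℂ)
      = (∑ i, (starRingEnd ℂ) (vlow n k i * z 0) * (vlow n k' i * z' 0))
        + ((n:ℂ))⁻¹ * (∑ j : Fin (n+1), if j = 0 then (0:ℂ) else cfac n k k' ^ (j : ℕ))
          * ∑ i, (starRingEnd ℂ) (![z 1, z 2] i) * (![z' 1, z' 2] i) := by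
  rw [Tlow, Tlow, inner_withLp,
    master n k k' (fun i => vlow n k i * z 0) (fun i => vlow n k' i * z' 0)
      ![z 1, z 2] ![z' 1, z' 2]]

lemma sqrt2_inv_sq : ((Real.sqrt 2 : ℂ))⁻¹ * ((Real.sqrt 2 : ℂ))⁻¹ = 2⁻¹ := by
  rw [← mul_inv, ← Complex.ofReal_mul, Real.mul_self_sqrt (by norm_num)]
  norm_num

lemma vlow_self (n k : ℕ) (z : ℂ) :
    ∑ i, (starRingEnd ℂ) (vlow n k i * z) * (vlow n k i * z) = (starRingEnd ℂ) z * z := by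
  by_cases hk : k = 1 <;>
    simp only [vlow, if_pos, hk, if_neg, reduceIte, Fin.sum_univ_two,
      Matrix.cons_val_zero, Matrix.cons_val_one, Matrix.head_cons] <;>
    simp only [_root_.map_mul, _root_.map_neg, _root_.map_inv₀, Complex.conj_ofReal,
      Complex.conj_I] <;>
    linear_combination (2 * (starRingEnd ℂ) z * z) * sqrt2_inv_sq
      + (-(((Real.sqrt 2 : ℂ))⁻¹ * ((Real.sqrt 2 : ℂ))⁻¹) * (starRingEnd ℂ) z * z)
        * Complex.I_mul_I

lemma vlow_orth (n k k' : ℕ) (hk : k = 1) (hk' : k' ≠ 1) (z z' : ℂ) :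
    ∑ i, (starRingEnd ℂ) (vlow n k i * z) * (vlow n k' i * z') = 0 := by
  simp only [vlow, hk, if_pos, if_neg hk', reduceIte, Fin.sum_univ_two,
    Matrix.cons_val_zero, Matrix.cons_val_one, Matrix.head_cons]
  simp only [_root_.map_mul, _root_.map_neg, _root_.map_inv₀, Complex.conj_ofReal,
    Complex.conj_I]
  linear_combination ((((Real.sqrt 2 : ℂ))⁻¹ * ((Real.sqrt 2 : ℂ))⁻¹) * (starRingEnd ℂ) z * z')
    * Complex.I_mul_I

lemma vlow_orth' (n k k' : ℕ) (hk : k ≠ 1) (hk' : k' = 1) (z z' : ℂ) :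
    ∑ i, (starRingEnd ℂ) (vlow n k i * z) * (vlow n k' i * z') = 0 := by
  simp only [vlow, hk', if_pos, if_neg hk, reduceIte, Fin.sum_univ_two,
    Matrix.cons_val_zero, Matrix.cons_val_one, Matrix.head_cons]
  simp only [_root_.map_mul, _root_.map_neg, _root_.map_inv₀, Complex.conj_ofReal,
    Complex.conj_I]
  linear_combination ((((Real.sqrt 2 : ℂ))⁻¹ * ((Real.sqrt 2 : ℂ))⁻¹) * (starRingEnd ℂ) z * z')
    * Complex.I_mul_I

lemma Tmid_linear (n k : ℕ) : IsLinearMap ℂ (Tmid n k) := by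
  constructor
  · intro w w'
    ext p
    simp only [Tmid, WithLp.equiv_symm_apply, PiLp.add_apply]
    by_cases hp : p.1 = 0
    · simp [hp]
    · simp only [if_neg hp]
      have : (fun i => w i + w' i) = (fun i => w i) + (fun i => w' i) := by
        funext i; simp
      rw [this, Matrix.mulVec_add]
      simp [mul_add]
  · intro c w
    ext p
    simp only [Tmid, WithLp.equiv_symm_apply, PiLp.smul_apply]
    by_cases hp : p.1 = 0
    · simp [hp]
    · simp only [if_neg hp]
      have : (fun i => c • w i) = c • (fun i => w i) := by
        funext i; simp
      rw [this, Matrix.mulVec_smul]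
      simp [smul_eq_mul]
      ring

lemma Tlow_linear (n k : ℕ) : IsLinearMap ℂ (Tlow n k) := by
  constructor
  · intro z z'
    ext p
    simp only [Tlow, WithLp.equiv_symm_apply, PiLp.add_apply]
    by_cases hp : p.1 = 0
    · simp [hp, mul_add, PiLp.add_apply]
    · simp only [if_neg hp]
      have : ![z 1 + z' 1, z 2 + z' 2] = ![z 1, z 2] + ![z' 1, z' 2] := by
        funext i; fin_cases i <;> simp
      rw [this, Matrix.mulVec_add]
      simp [mul_add]
  · intro c z
    ext p
    simp only [Tlow, WithLp.equiv_symm_apply, PiLp.smul_apply]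
    by_cases hp : p.1 = 0
    · simp [hp, PiLp.smul_apply, smul_eq_mul]
      ring
    · simp only [if_neg hp]
      have : ![c • z 1, c • z 2] = c • ![z 1, z 2] := by
        funext i; fin_cases i <;> simp
      rw [this, Matrix.mulVec_smul]
      simp [smul_eq_mul]
      ring


theorem Tk_isometry_and_orthogonal (n : ℕ) (hn : 2 < n) :
    (∀ k, ((2 ≤ k ∧ k ≤ n - 2) ∨ k = n) →
      IsLinearMap ℂ (Tmid n k) ∧ ∀ w, ‖Tmid n k w‖ = ‖w‖) ∧
    (∀ k, (k = 1 ∨ k = n - 1) →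
      IsLinearMap ℂ (Tlow n k) ∧ ∀ z, ‖Tlow n k z‖ = ‖z‖) ∧
    (∀ k k', ((2 ≤ k ∧ k ≤ n - 2) ∨ k = n) → ((2 ≤ k' ∧ k' ≤ n - 2) ∨ k' = n) →
      k ≠ k' → ∀ w w', inner ℂ (Tmid n k w) (Tmid n k' w') = (0 : ℂ)) ∧
    (∀ k k', ((2 ≤ k ∧ k ≤ n - 2) ∨ k = n) → (k' = 1 ∨ k' = n - 1) →
      ∀ w z, inner ℂ (Tmid n k w) (Tlow n k' z) = (0 : ℂ)) ∧
    (∀ k k', (k = 1 ∨ k = n - 1) → (k' = 1 ∨ k' = n - 1) → k ≠ k' →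
      ∀ z z', inner ℂ (Tlow n k z) (Tlow n k' z') = (0 : ℂ)) := by
  have hn0 : 0 < n := by omega
  have hnC : (n : ℂ) ≠ 0 := Nat.cast_ne_zero.2 hn0.ne'
  -- the zero sum for distinct indices
  have hzero : ∀ k k', 1 ≤ k → k ≤ n → 1 ≤ k' → k' ≤ n → k ≠ k' →
      ∑ j : Fin (n+1), (if j = 0 then (0:ℂ) else cfac n k k' ^ (j : ℕ)) = 0 := by
    intro k k' h1 h2 h3 h4 h5
    exact sum_if_pow_eq_zero n _ (cfac_pow_n n k k' hn0)
      (cfac_ne_one n k k' hn0 h2 h4 h1 h3 h5)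
  have hone : ∀ k, ∑ j : Fin (n+1), (if j = 0 then (0:ℂ) else cfac n k k ^ (j : ℕ)) = n := by
    intro k
    rw [Finset.sum_congr rfl (fun j _ => by rw [cfac_self, one_pow]), sum_if_one_eq]
  refine ⟨?_, ?_, ?_, ?_, ?_⟩
  · intro k _
    refine ⟨Tmid_linear n k, fun w => ?_⟩
    apply norm_eq_of_inner_eq
    rw [inner_Tmid_Tmid, hone, inv_mul_cancel₀ hnC, one_mul]
  · intro k _
    refine ⟨Tlow_linear n k, fun z => ?_⟩
    apply norm_eq_of_inner_eq
    rw [inner_Tlow_Tlow, hone, vlow_self, inv_mul_cancel₀ hnC, one_mul]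
    simp only [PiLp.inner_apply, RCLike.inner_apply, Fin.sum_univ_three, Fin.sum_univ_two,
      Matrix.cons_val_zero, Matrix.cons_val_one, Matrix.head_cons]
    ring
  · intro k k' hk hk' hne w w'
    rw [inner_Tmid_Tmid, hzero k k' (by omega) (by omega) (by omega) (by omega) hne]
    ring
  · intro k k' hk hk' w z
    rw [inner_Tmid_Tlow, hzero k k' (by omega) (by omega) (by omega) (by omega) (by omega)]
    ring
  · intro k k' hk hk' hne z z'
    rw [inner_Tlow_Tlow, hzero k k' (by omega) (by omega) (by omega) (by omega) hne]
    have hvv : ∑ i, (starRingEnd ℂ) (vlow n k i * z 0) * (vlow n k' i * z' 0) = 0 := by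
      rcases hk with hk | hk
      · exact vlow_orth n k k' hk (by omega) _ _
      · exact vlow_orth' n k k' (by omega) (by omega) _ _
    rw [hvv]
    ring
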